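/- Let ξ, η ∈ ℝ² with 0 < |ξ| < |η|, let θ be the polar argument of ξ and φ the polar argument of η, and let V₁(ξ,η) = (ξ+η)^⊥/|ξ+η|² − η^⊥/|η|². Then ξ · V₁(ξ,η) = Σ_{n=2}^∞ (−1)^{n−1} (|ξ|^n/|η|^n) sin(n(θ−φ)). -/

import Mathlib

open Real MeasureTheory
open scoped Topology RealInnerProductSpace

noncomputable section

abbrev E2 := EuclideanSpace ℝ (Fin 2)

def perp (x : E2) : E2 := (WithLp.equiv 2 (Fin 2 → ℝ)).symm ![-(x 1), x 0]

/-- V₁(ξ,η) = (ξ+η)^⊥/|ξ+η|² − η^⊥/|η|². -/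
def V1 (ξ η : E2) : E2 := (‖ξ + η‖^2)⁻¹ • perp (ξ + η) - (‖η‖^2)⁻¹ • perp η

lemma scalar_key (r R s c : ℝ) (hR : R ≠ 0) (hD : r^2 + 2*(r*R*c) + R^2 ≠ 0)
    (hcs : s^2+c^2 = 1) :
    (r^2+2*(r*R*c)+R^2)⁻¹ * (r*R*s) - (R^2)⁻¹*(r*R*s)
      = -((2*((r/R)*c)*((r/R)*s) * (1+(r/R)*c) - (((r/R)*c)^2 - ((r/R)*s)^2)*((r/R)*s))
          / ((r^2+2*(r*R*c)+R^2)/R^2)) := by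
  field_simp
  ring_nf
  linear_combination (r^3*s*(r * R * c * 2 + r ^ 2 + R ^ 2)⁻¹) * hcs + (r*s) * (inv_mul_cancel₀ (by convert hD using 1; ring : r * R * c * 2 + r ^ 2 + R ^ 2 ≠ 0))

lemma nsq_key (r R s c q : ℝ) (hR : R ≠ 0) (hq : q = r/R) (hcs : s^2+c^2 = 1) :
    (1 - -(q*c))^2 + (-(q*s))^2 = (r^2 + 2*(r*R*c) + R^2)/R^2 := by
  subst hq
  field_simp
  ring_nf
  linear_combination r^2 * hcs

theorem stmt0 (ξ η : E2) (θ φ : ℝ)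
    (hξ : 0 < ‖ξ‖) (hlt : ‖ξ‖ < ‖η‖)
    (hθ0 : ξ 0 = ‖ξ‖ * Real.cos θ) (hθ1 : ξ 1 = ‖ξ‖ * Real.sin θ)
    (hφ0 : η 0 = ‖η‖ * Real.cos φ) (hφ1 : η 1 = ‖η‖ * Real.sin φ) :
    ⟪ξ, V1 ξ η⟫ =
      ∑' n : ℕ, (-1 : ℝ)^(n + 1) * (‖ξ‖ / ‖η‖)^(n + 2) *
        Real.sin ((n + 2 : ℕ) * (θ - φ)) := by
  have hR0 : (0:ℝ) < ‖η‖ := lt_trans hξ hlt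
  set r := ‖ξ‖ with hrdef
  set R := ‖η‖ with hRdef
  set α := θ - φ with hαdef
  set s := Real.sin α with hsdef
  set c := Real.cos α with hcdef
  have hs' : s = Real.sin θ * Real.cos φ - Real.cos θ * Real.sin φ := by
    rw [hsdef, hαdef, Real.sin_sub]
  have hc' : c = Real.cos θ * Real.cos φ + Real.sin θ * Real.sin φ := by
    rw [hcdef, hαdef, Real.cos_sub]
  have hcs : s^2 + c^2 = 1 := Real.sin_sq_add_cos_sq α
  set q := r / R with hqdef
  have hq0 : 0 < q := div_pos hξ hR0
  have hq1 : q < 1 := (div_lt_one hR0).2 hlt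
  have hc1 : -1 ≤ c := Real.neg_one_le_cos α
  have hD : 0 < r^2 + 2*(r*R*c) + R^2 := by
    nlinarith [mul_nonneg (mul_pos hξ hR0).le (by linarith : (0:ℝ) ≤ c + 1),
      sq_nonneg (R - r)]
  have hRne : R ≠ 0 := hR0.ne'
  have hDne : r^2 + 2*(r*R*c) + R^2 ≠ 0 := hD.ne'
  -- LHS computation
  have hinner : ⟪ξ, η⟫ = r*R*c := by
    have h : ⟪ξ, η⟫ = ξ 0 * η 0 + ξ 1 * η 1 := by
      simp [PiLp.inner_apply, Fin.sum_univ_two]; ring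
    rw [h, hθ0, hθ1, hφ0, hφ1, hc']; ring
  have hnorm : ‖ξ + η‖^2 = r^2 + 2*(r*R*c) + R^2 := by
    rw [norm_add_sq_real, hinner]
  have hp1 : ⟪ξ, perp (ξ + η)⟫ = r*R*s := by
    have h : ⟪ξ, perp (ξ + η)⟫ = ξ 0 * (-(ξ 1 + η 1)) + ξ 1 * (ξ 0 + η 0) := by
      simp [perp, PiLp.inner_apply, Fin.sum_univ_two]; ring
    rw [h, hθ0, hθ1, hφ0, hφ1, hs']; ring
  have hp2 : ⟪ξ, perp η⟫ = r*R*s := by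
    have h : ⟪ξ, perp η⟫ = ξ 0 * (-(η 1)) + ξ 1 * η 0 := by
      simp [perp, PiLp.inner_apply, Fin.sum_univ_two]; ring
    rw [h, hθ0, hθ1, hφ0, hφ1, hs']; ring
  have hLHS : ⟪ξ, V1 ξ η⟫ = (r^2 + 2*(r*R*c) + R^2)⁻¹ * (r*R*s) - (R^2)⁻¹ * (r*R*s) := by
    rw [V1, inner_sub_right, real_inner_smul_right, real_inner_smul_right,
      hnorm, hp1, hp2]
  -- RHS: complex geometric series
  set z : ℂ := -(q:ℂ) * Complex.exp (α * Complex.I) with hzdef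
  have hzre : z.re = -(q*c) := by
    simp [hzdef, Complex.exp_ofReal_mul_I_re, hcdef]
  have hzim : z.im = -(q*s) := by
    simp [hzdef, Complex.exp_ofReal_mul_I_im, hsdef]
  have hzn : ‖z‖ < 1 := by
    rw [hzdef]
    simp only [norm_mul, norm_neg, Complex.norm_real,
      Complex.norm_exp_ofReal_mul_I, mul_one]
    rwa [Real.norm_eq_abs, abs_of_pos hq0]
  have hterm : ∀ n : ℕ, (-1 : ℝ)^(n + 1) * q^(n + 2) * Real.sin ((n + 2 : ℕ) * α)
      = -(z^(n+2)).im := by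
    intro n
    have hz : z^(n+2)
        = (((-q)^(n+2) : ℝ) : ℂ) * Complex.exp ((((n+2 : ℕ) * α : ℝ)) * Complex.I) := by
      rw [hzdef, mul_pow, ← Complex.exp_nat_mul]
      push_cast
      ring_nf
    rw [hz]
    simp only [Complex.mul_im, Complex.ofReal_re, Complex.ofReal_im,
      Complex.exp_ofReal_mul_I_im, Complex.exp_ofReal_mul_I_re, zero_mul, add_zero]
    rw [neg_pow]
    push_cast
    ring
  have hsum : Summable (fun n : ℕ => z^(n+2)) := by
    have h := (summable_geometric_of_norm_lt_one hzn).mul_left (z^2)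
    apply h.congr
    intro n; ring
  have htsum : ∑' n : ℕ, z^(n+2) = z^2 * (1-z)⁻¹ := by
    calc ∑' n : ℕ, z^(n+2) = ∑' n : ℕ, z^2 * z^n := by
          congr 1; funext n; ring
      _ = z^2 * ∑' n : ℕ, z^n := tsum_mul_left
      _ = z^2 * (1-z)⁻¹ := by rw [tsum_geometric_of_norm_lt_one hzn]
  have hRHS : ∑' n : ℕ, (-1 : ℝ)^(n + 1) * q^(n + 2) * Real.sin ((n + 2 : ℕ) * α)
      = -(z^2 * (1-z)⁻¹).im := by
    calc ∑' n : ℕ, (-1 : ℝ)^(n + 1) * q^(n + 2) * Real.sin ((n + 2 : ℕ) * α)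
        = ∑' n : ℕ, -((z^(n+2)).im) := by
          congr 1; funext n; exact hterm n
      _ = -∑' n : ℕ, (z^(n+2)).im := by rw [tsum_neg]
      _ = -(∑' n : ℕ, z^(n+2)).im := by rw [Complex.im_tsum hsum]
      _ = -(z^2 * (1-z)⁻¹).im := by rw [htsum]
  rw [hLHS, hRHS]
  have hN : Complex.normSq (1 - z) = (r^2 + 2*(r*R*c) + R^2)/R^2 := by
    have h1 : Complex.normSq (1 - z) = (1 - -(q*c))^2 + (-(q*s))^2 := by
      simp [Complex.normSq_apply, Complex.sub_re, Complex.sub_im, hzre, hzim]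
      ring
    rw [h1]
    exact nsq_key r R s c q hRne hqdef hcs
  have him : (z^2 * (1-z)⁻¹).im =
      (2*(q*c)*(q*s) * (1 + q*c) - ((q*c)^2 - (q*s)^2) * (q*s)) / Complex.normSq (1-z) := by
    simp only [Complex.mul_im, Complex.mul_re, Complex.inv_im, Complex.inv_re,
      Complex.sub_re, Complex.sub_im, Complex.one_re, Complex.one_im, pow_two,
      hzre, hzim]
    ring
  rw [him, hN, hqdef]
  exact scalar_key r R s c hRne hDne hcs
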